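/- Correctness of taint propagation through function application: let f : T₁ → ⋯ → Tₙ → T be any n-ary function (n arbitrary, stated e.g. for n = 2), let Δ₁ : X × 𝕍 → T₁ and Δ₂ : X × 𝕍 → T₂ be terms with SICs Ψ₁, Ψ₂ w.r.t. X, and let Θ : 𝕍 → Prop be any SIC for the term fun (x,v) => f (Δ₁ (x,v)) (Δ₂ (x,v)) w.r.t. X. Then fun v => Θ v ∨ (Ψ₁ v ∧ Ψ₂ v) is also a SIC for fun (x,v) => f (Δ₁ (x,v)) (Δ₂ (x,v)) w.r.t. X. -/
import Mathlib


/-- Correctness of taint propagation through function application (binary case). -/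
theorem inferSIC_correct {X 𝕍 T₁ T₂ T : Type*} (f : T₁ → T₂ → T)
    (Δ₁ : X × 𝕍 → T₁) (Δ₂ : X × 𝕍 → T₂) (Ψ₁ Ψ₂ Θ : 𝕍 → Prop)
    (h₁ : ∀ v, Ψ₁ v → ∀ x y : X, Δ₁ (x, v) = Δ₁ (y, v))
    (h₂ : ∀ v, Ψ₂ v → ∀ x y : X, Δ₂ (x, v) = Δ₂ (y, v))
    (hΘ : ∀ v, Θ v → ∀ x y : X, f (Δ₁ (x, v)) (Δ₂ (x, v)) = f (Δ₁ (y, v)) (Δ₂ (y, v))) :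
    ∀ v, (fun v => Θ v ∨ (Ψ₁ v ∧ Ψ₂ v)) v →
      ∀ x y : X, f (Δ₁ (x, v)) (Δ₂ (x, v)) = f (Δ₁ (y, v)) (Δ₂ (y, v)) := by
  rintro v (h | ⟨hp1, hp2⟩) x y
  · exact hΘ v h x y
  · rw [h₁ v hp1 x y, h₂ v hp2 x y]
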